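/- arXiv:2504.09025 — 5 statements merged into one kernel-verified Lean document; each statement's English description precedes it below -/
import Mathlib

section
/- Fix real numbers σ_X > 0, σ_S > 0, θ₁ ≠ 0 with θ₁² < σ_S²·σ_X², a real number h, and a real number μ_X. Write ρ² = θ₁²/(σ_S²·σ_X²) and K(C) = (σ_S²·σ_X⁴/θ₁²)·(1 − exp(2·(C − h))). Let C and D be real numbers with h + (1/2)·log(1 − ρ²) < C ≤ h and D ≥ σ_X² − K(C). Then the infimum, over all triples (μ̂ ∈ ℝ, σ̂ > 0, θ₂ ∈ ℝ) satisfying θ₂² < σ_X²·σ̂², (μ_X − μ̂)² + σ_X² + σ̂² − 2·θ₂ ≤ D, and −(1/2)·log(1 − (θ₁²/(σ_S²·σ_X⁴))·(θ₂²/σ̂²)) ≥ h − C, of the quantity −(1/2)·log(1 − θ₂²/(σ_X²·σ̂²)), equals −(1/2)·log(1 − (1/ρ²)·(1 − exp(2·(C − h)))). -/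
open Real

set_option maxHeartbeats 1000000 in
/-- Classification-limited branch of the Gaussian rate-distortion-classification
function, in finite-dimensional parametric form: the infimum of the rate over admissible
Gaussian reconstruction parameters equals
`-(1/2) * log (1 - (1/ρ²) * (1 - exp (2*(C - h))))` where `ρ² = θ₁²/(σS²·σX²)`. -/
theorem gaussian_RDC_classification_limited_branch
    (σX σS θ₁ h μX : ℝ) (hσX : 0 < σX) (hσS : 0 < σS) (hθ₁ : θ₁ ≠ 0)
    (hcorr : θ₁ ^ 2 < σS ^ 2 * σX ^ 2)
    (C D : ℝ)
    (hClow : h + 1 / 2 * Real.log (1 - θ₁ ^ 2 / (σS ^ 2 * σX ^ 2)) < C) (hChigh : C ≤ h)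
    (hDC : D ≥ σX ^ 2 - σS ^ 2 * σX ^ 4 / θ₁ ^ 2 * (1 - Real.exp (2 * (C - h)))) :
    IsGLB
      { r : ℝ | ∃ μhat σhat θ₂ : ℝ, 0 < σhat ∧ θ₂ ^ 2 < σX ^ 2 * σhat ^ 2 ∧
          (μX - μhat) ^ 2 + σX ^ 2 + σhat ^ 2 - 2 * θ₂ ≤ D ∧
          -(1 / 2) * Real.log (1 - θ₁ ^ 2 / (σS ^ 2 * σX ^ 4) * (θ₂ ^ 2 / σhat ^ 2)) ≥ h - C ∧
          r = -(1 / 2) * Real.log (1 - θ₂ ^ 2 / (σX ^ 2 * σhat ^ 2)) }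
      (-(1 / 2) *
        Real.log (1 - 1 / (θ₁ ^ 2 / (σS ^ 2 * σX ^ 2)) * (1 - Real.exp (2 * (C - h))))) := by
  have hσX2 : (0:ℝ) < σX ^ 2 := by positivity
  have hσS2 : (0:ℝ) < σS ^ 2 := by positivity
  have hθ₁2 : (0:ℝ) < θ₁ ^ 2 := by positivity
  set ρ2 : ℝ := θ₁ ^ 2 / (σS ^ 2 * σX ^ 2) with hρ2def
  have hρ2pos : 0 < ρ2 := by positivity
  have hρ2lt1 : ρ2 < 1 := (div_lt_one (by positivity)).2 hcorr
  set E : ℝ := Real.exp (2 * (C - h)) with hEdef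
  have hEpos : 0 < E := Real.exp_pos _
  have hE1 : E ≤ 1 := by
    rw [hEdef]; exact Real.exp_le_one_iff.2 (by linarith)
  have hEgt : 1 - ρ2 < E := by
    have h1 : Real.log (1 - ρ2) < 2 * (C - h) := by linarith
    calc 1 - ρ2 = Real.exp (Real.log (1 - ρ2)) := (Real.exp_log (by linarith)).symm
      _ < E := Real.exp_lt_exp.2 h1
  set q : ℝ := 1 / ρ2 * (1 - E) with hqdef
  have hq0 : 0 ≤ q := by
    apply mul_nonneg (by positivity); linarith
  have hq1 : q < 1 := by
    rw [hqdef, div_mul_eq_mul_div, one_mul, div_lt_one hρ2pos]; linarith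
  have hq1' : 0 < 1 - q := by linarith
  have hK : σS ^ 2 * σX ^ 4 / θ₁ ^ 2 * (1 - E) = σX ^ 2 * q := by
    rw [hqdef, hρ2def]; field_simp
  rw [hK] at hDC
  constructor
  · rintro r ⟨μhat, σhat, θ₂, hσh, hlt, hdist, hclass, rfl⟩
    have hσh2 : (0:ℝ) < σhat ^ 2 := by positivity
    set s : ℝ := θ₂ ^ 2 / (σX ^ 2 * σhat ^ 2) with hsdef
    have hs0 : 0 ≤ s := by positivity
    have hs1 : s < 1 := (div_lt_one (by positivity)).2 hlt
    have hco : θ₁ ^ 2 / (σS ^ 2 * σX ^ 4) * (θ₂ ^ 2 / σhat ^ 2) = ρ2 * s := by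
      rw [hsdef, hρ2def]; field_simp
    rw [hco] at hclass
    have hpos1 : 0 < 1 - ρ2 * s := by nlinarith
    have hlog : Real.log (1 - ρ2 * s) ≤ 2 * (C - h) := by linarith
    have h2 : 1 - ρ2 * s ≤ E := by
      calc 1 - ρ2 * s = Real.exp (Real.log (1 - ρ2 * s)) := (Real.exp_log hpos1).symm
        _ ≤ E := Real.exp_le_exp.2 hlog
    have hsq : q ≤ s := by
      rw [hqdef, div_mul_eq_mul_div, one_mul, div_le_iff₀ hρ2pos]; nlinarith
    have hlog2 : Real.log (1 - s) ≤ Real.log (1 - q) :=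
      Real.log_le_log (by linarith) (by linarith)
    linarith
  · intro b hb
    by_contra hcon
    push_neg at hcon
    have hlog0 : -(2 * b) < Real.log (1 - q) := by linarith
    have hexp : Real.exp (-(2 * b)) < 1 - q := by
      calc Real.exp (-(2 * b)) < Real.exp (Real.log (1 - q)) := Real.exp_lt_exp.2 hlog0
        _ = 1 - q := Real.exp_log hq1'
    set u : ℝ := σX ^ 2 * (1 - Real.exp (-(2 * b))) with hudef
    have htu : σX ^ 2 * q < u := by rw [hudef]; nlinarith
    have huX : u < σX ^ 2 := by
      have := Real.exp_pos (-(2 * b)); rw [hudef]; nlinarith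
    set t : ℝ := (σX ^ 2 * q + u) / 2 with htdef
    have ht1 : σX ^ 2 * q < t := by rw [htdef]; linarith
    have ht2 : t < u := by rw [htdef]; linarith
    have hqX : 0 ≤ σX ^ 2 * q := by positivity
    have htpos : 0 < t := by linarith
    have htX : t < σX ^ 2 := by linarith
    have hsq2 : Real.sqrt t ^ 2 = t := Real.sq_sqrt htpos.le
    have hmem : -(1 / 2) * Real.log (1 - t ^ 2 / (σX ^ 2 * Real.sqrt t ^ 2)) ∈
        { r : ℝ | ∃ μhat σhat θ₂ : ℝ, 0 < σhat ∧ θ₂ ^ 2 < σX ^ 2 * σhat ^ 2 ∧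
          (μX - μhat) ^ 2 + σX ^ 2 + σhat ^ 2 - 2 * θ₂ ≤ D ∧
          -(1 / 2) * Real.log (1 - θ₁ ^ 2 / (σS ^ 2 * σX ^ 4) * (θ₂ ^ 2 / σhat ^ 2)) ≥ h - C ∧
          r = -(1 / 2) * Real.log (1 - θ₂ ^ 2 / (σX ^ 2 * σhat ^ 2)) } := by
      refine ⟨μX, Real.sqrt t, t, Real.sqrt_pos.2 htpos, ?_, ?_, ?_, rfl⟩
      · rw [hsq2]; nlinarith
      · rw [hsq2]; nlinarith
      · -- classification constraint
        have hco2 : θ₁ ^ 2 / (σS ^ 2 * σX ^ 4) * (t ^ 2 / Real.sqrt t ^ 2) =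
            ρ2 * (t / σX ^ 2) := by
          rw [hsq2, hρ2def]; field_simp
        rw [hco2]
        have hqt : q < t / σX ^ 2 := (lt_div_iff₀ hσX2).2 (by linarith)
        have htd1 : t / σX ^ 2 < 1 := (div_lt_one hσX2).2 htX
        have hρq : ρ2 * q = 1 - E := by
          rw [hqdef]; field_simp
        have harg : 0 < 1 - ρ2 * (t / σX ^ 2) := by nlinarith
        have hle : 1 - ρ2 * (t / σX ^ 2) < E := by nlinarith
        have hlog3 : Real.log (1 - ρ2 * (t / σX ^ 2)) ≤ 2 * (C - h) := by
          calc Real.log (1 - ρ2 * (t / σX ^ 2)) ≤ Real.log E :=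
                Real.log_le_log harg hle.le
            _ = 2 * (C - h) := by rw [hEdef, Real.log_exp]
        linarith
    have hbr := hb hmem
    have hr : -(1 / 2) * Real.log (1 - t ^ 2 / (σX ^ 2 * Real.sqrt t ^ 2)) < b := by
      have harg : 1 - t ^ 2 / (σX ^ 2 * Real.sqrt t ^ 2) = 1 - t / σX ^ 2 := by
        rw [hsq2]; field_simp
      rw [harg]
      have h5 : Real.exp (-(2 * b)) < 1 - t / σX ^ 2 := by
        have : t / σX ^ 2 < 1 - Real.exp (-(2 * b)) := by
          rw [div_lt_iff₀ hσX2]; rw [hudef] at ht2; linarith [ht2]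
        linarith
      have h6 : -(2 * b) < Real.log (1 - t / σX ^ 2) := by
        calc -(2 * b) = Real.log (Real.exp (-(2 * b))) := (Real.log_exp _).symm
          _ < Real.log (1 - t / σX ^ 2) := Real.log_lt_log (Real.exp_pos _) h5
      linarith
    linarith
end

section
/- Fix real numbers σ_X > 0, σ_S > 0, θ₁ ≠ 0 with θ₁² < σ_S²·σ_X², a real number h, and a real number μ_X. Write ρ² = θ₁²/(σ_S²·σ_X²). Let R > 0 and let C be a real number with C ≥ h + (1/2)·log(1 − ρ²·(1 − exp(−2·R))). Then the infimum, over all triples (μ̂ ∈ ℝ, σ̂ > 0, θ₂ ∈ ℝ) satisfying θ₂² < σ_X²·σ̂², −(1/2)·log(1 − θ₂²/(σ_X²·σ̂²)) ≤ R, and −(1/2)·log(1 − (θ₁²/(σ_S²·σ_X⁴))·(θ₂²/σ̂²)) ≥ h − C, of the distortion (μ_X − μ̂)² + σ_X² + σ̂² − 2·θ₂, equals σ_X²·exp(−2·R); moreover this infimum is attained (at μ̂ = μ_X, σ̂² = θ₂ = σ_X²·(1 − exp(−2·R))). -/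
open Real

/-- Rate-active branch of the Gaussian distortion-classification-rate function `D(C,R)`
(Theorem 2), in finite-dimensional parametric form: the infimum of the distortion over
admissible Gaussian reconstruction parameters equals `σX^2 * exp (-2*R)`, attained. -/
theorem gaussian_DCR_rate_active_branch
    (σX σS θ₁ h μX : ℝ) (hσX : 0 < σX) (hσS : 0 < σS) (hθ₁ : θ₁ ≠ 0)
    (hcorr : θ₁ ^ 2 < σS ^ 2 * σX ^ 2)
    (R C : ℝ) (hR : 0 < R)
    (hC : C ≥ h + 1 / 2 *
      Real.log (1 - θ₁ ^ 2 / (σS ^ 2 * σX ^ 2) * (1 - Real.exp (-2 * R)))) :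
    IsLeast
      { d : ℝ | ∃ μhat σhat θ₂ : ℝ, 0 < σhat ∧ θ₂ ^ 2 < σX ^ 2 * σhat ^ 2 ∧
          -(1 / 2) * Real.log (1 - θ₂ ^ 2 / (σX ^ 2 * σhat ^ 2)) ≤ R ∧
          -(1 / 2) * Real.log (1 - θ₁ ^ 2 / (σS ^ 2 * σX ^ 4) * (θ₂ ^ 2 / σhat ^ 2)) ≥ h - C ∧
          d = (μX - μhat) ^ 2 + σX ^ 2 + σhat ^ 2 - 2 * θ₂ }
      (σX ^ 2 * Real.exp (-2 * R)) := by
  have hE : 0 < Real.exp (-2 * R) := Real.exp_pos _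
  have hE1 : Real.exp (-2 * R) < 1 := by
    rw [Real.exp_lt_one_iff]; linarith
  set a : ℝ := 1 - Real.exp (-2 * R) with ha
  have ha0 : 0 < a := by simp [ha]; linarith
  have ha1 : a < 1 := by rw [ha]; linarith
  constructor
  · -- membership: μhat = μX, σhat = σX * √a, θ₂ = σX^2 * a
    refine ⟨μX, σX * Real.sqrt a, σX ^ 2 * a, ?_, ?_, ?_, ?_, ?_⟩
    · positivity
    · have hs : (σX * Real.sqrt a) ^ 2 = σX ^ 2 * a := by
        rw [mul_pow, Real.sq_sqrt ha0.le]
      rw [hs]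
      have : (σX ^ 2 * a) ^ 2 = (σX ^ 2 * a) * a * σX ^ 2 := by ring
      rw [this]
      nlinarith [sq_nonneg σX, mul_pos (mul_pos (pow_pos hσX 2) ha0) (pow_pos hσX 2)]
    · have hs : (σX * Real.sqrt a) ^ 2 = σX ^ 2 * a := by
        rw [mul_pow, Real.sq_sqrt ha0.le]
      have hne : σX ^ 2 * (σX ^ 2 * a) ≠ 0 := by positivity
      have : (σX ^ 2 * a) ^ 2 / (σX ^ 2 * ((σX * Real.sqrt a) ^ 2)) = a := by
        rw [hs]; field_simp
      rw [this]
      have : (1 : ℝ) - a = Real.exp (-2 * R) := by simp [ha]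
      rw [this, Real.log_exp]; linarith
    · have hs : (σX * Real.sqrt a) ^ 2 = σX ^ 2 * a := by
        rw [mul_pow, Real.sq_sqrt ha0.le]
      have heq : θ₁ ^ 2 / (σS ^ 2 * σX ^ 4) * ((σX ^ 2 * a) ^ 2 / (σX * Real.sqrt a) ^ 2)
          = θ₁ ^ 2 / (σS ^ 2 * σX ^ 2) * a := by
        rw [hs]; field_simp
      rw [heq]; linarith
    · have hs : (σX * Real.sqrt a) ^ 2 = σX ^ 2 * a := by
        rw [mul_pow, Real.sq_sqrt ha0.le]
      rw [hs]; simp [ha]; ring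
  · -- lower bound
    rintro d ⟨μhat, σhat, θ₂, hσhat, hlt, hrate, _, rfl⟩
    have hden : 0 < σX ^ 2 * σhat ^ 2 := by positivity
    have ht1 : θ₂ ^ 2 / (σX ^ 2 * σhat ^ 2) < 1 := (div_lt_one hden).mpr hlt
    have hpos : 0 < 1 - θ₂ ^ 2 / (σX ^ 2 * σhat ^ 2) := by linarith
    have hlog : -2 * R ≤ Real.log (1 - θ₂ ^ 2 / (σX ^ 2 * σhat ^ 2)) := by linarith
    have hexp : Real.exp (-2 * R) ≤ 1 - θ₂ ^ 2 / (σX ^ 2 * σhat ^ 2) := by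
      calc Real.exp (-2 * R) ≤ Real.exp (Real.log (1 - θ₂ ^ 2 / (σX ^ 2 * σhat ^ 2))) :=
            Real.exp_le_exp.mpr hlog
        _ = _ := Real.exp_log hpos
    have hsq : θ₂ ^ 2 ≤ σX ^ 2 * σhat ^ 2 * a := by
      have := (div_le_iff₀ hden).mp (by linarith : θ₂ ^ 2 / (σX ^ 2 * σhat ^ 2) ≤ a)
      linarith
    have key : 2 * θ₂ ≤ σX ^ 2 * a + σhat ^ 2 := by
      rcases le_or_gt θ₂ 0 with hneg | hposθ
      · nlinarith [mul_pos (pow_pos hσX 2) ha0, pow_pos hσhat 2]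
      · nlinarith [sq_nonneg (σX ^ 2 * a - σhat ^ 2), hsq, hposθ,
          mul_pos (pow_pos hσX 2) ha0, pow_pos hσhat 2]
    have hrexp : Real.exp (-2 * R) = 1 - a := by rw [ha]; ring
    rw [hrexp]
    nlinarith [sq_nonneg (μX - μhat), key]
end

section
/- Let σ_X > 0, σ̂ > 0, θ₂ ∈ ℝ with θ₂² < σ_X²·σ̂², and let D be a real number with 0 < D ≤ σ_X². If σ_X² + σ̂² − 2·θ₂ ≤ D, then −(1/2)·log(1 − θ₂²/(σ_X²·σ̂²)) ≥ (1/2)·log(σ_X²/D). -/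
open Real

/-- Converse step in the Gaussian rate-distortion analysis, in reduced parametric form:
achieving distortion at most `D ≤ σX^2` forces the mutual information to be at least the
Shannon rate-distortion value `(1/2) * log (σX^2 / D)`. -/
theorem gaussian_rate_distortion_converse
    (σX σhat θ₂ D : ℝ) (hσX : 0 < σX) (hσhat : 0 < σhat)
    (hθ₂ : θ₂ ^ 2 < σX ^ 2 * σhat ^ 2) (hD0 : 0 < D) (hDX : D ≤ σX ^ 2)
    (hdist : σX ^ 2 + σhat ^ 2 - 2 * θ₂ ≤ D) :
    -(1 / 2) * Real.log (1 - θ₂ ^ 2 / (σX ^ 2 * σhat ^ 2)) ≥ 1 / 2 * Real.log (σX ^ 2 / D) := by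
  have hA : 0 < σX ^ 2 * σhat ^ 2 := by positivity
  have h1 : 0 < 1 - θ₂ ^ 2 / (σX ^ 2 * σhat ^ 2) := by
    rw [sub_pos, div_lt_one hA]; exact hθ₂
  -- key algebraic inequality
  have hkey : σX ^ 2 * σhat ^ 2 - θ₂ ^ 2 ≤ D * σhat ^ 2 := by
    nlinarith [sq_nonneg (σhat ^ 2 - σX ^ 2 + D), sq_nonneg θ₂,
      sq_nonneg (σX ^ 2 + σhat ^ 2 - D - 2 * θ₂), sq_nonneg σhat, sq_nonneg σX]
  have hfrac : σX ^ 2 / D ≤ (1 - θ₂ ^ 2 / (σX ^ 2 * σhat ^ 2))⁻¹ := by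
    rw [← one_div, div_le_div_iff₀ hD0 h1]
    have h2 : θ₂ ^ 2 / (σX ^ 2 * σhat ^ 2) * (σX ^ 2 * σhat ^ 2) = θ₂ ^ 2 := by
      field_simp
    nlinarith [mul_le_mul_of_nonneg_left hkey (le_of_lt (pow_pos hσX 2))]
  have hlog := Real.log_le_log (by positivity) hfrac
  rw [Real.log_inv] at hlog
  linarith
end

section
/- Let σ_X > 0, σ̂ > 0, and let D₁, D₃, D_b be real numbers with σ_X² + σ̂² − D₃ ≥ 0, D₁ ≤ σ_X² − (σ_X² + σ̂² − D₃)²/(4·σ̂²), and D_b ≤ 2·D₁. Then D₃ − D_b ≥ σ_X² + σ̂² − 2·σ̂·√(σ_X² − D₁) − 2·D₁. -/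
open Real

/-- Distortion-gap lower bound of Theorem 5. -/
theorem distortion_gap_lower_bound
    (σX σhat D₁ D₃ Db : ℝ) (hσX : 0 < σX) (hσhat : 0 < σhat)
    (h₁ : σX ^ 2 + σhat ^ 2 - D₃ ≥ 0)
    (h₂ : D₁ ≤ σX ^ 2 - (σX ^ 2 + σhat ^ 2 - D₃) ^ 2 / (4 * σhat ^ 2))
    (h₃ : Db ≤ 2 * D₁) :
    D₃ - Db ≥ σX ^ 2 + σhat ^ 2 - 2 * σhat * Real.sqrt (σX ^ 2 - D₁) - 2 * D₁ := by
  have h4 : (0:ℝ) < 4 * σhat ^ 2 := by positivity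
  have hsq : (σX ^ 2 + σhat ^ 2 - D₃) ^ 2 ≤ 4 * σhat ^ 2 * (σX ^ 2 - D₁) := by
    have h' : (σX ^ 2 + σhat ^ 2 - D₃) ^ 2 / (4 * σhat ^ 2) ≤ σX ^ 2 - D₁ := by linarith
    rw [div_le_iff₀ h4] at h'
    nlinarith [h']
  have key : σX ^ 2 + σhat ^ 2 - D₃ ≤ 2 * σhat * Real.sqrt (σX ^ 2 - D₁) := by
    have h5 : σX ^ 2 + σhat ^ 2 - D₃ ≤ Real.sqrt (4 * σhat ^ 2 * (σX ^ 2 - D₁)) := by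
      rw [show (4 * σhat ^ 2 * (σX ^ 2 - D₁)) = (2*σhat)^2 * (σX ^ 2 - D₁) by ring]
      exact (Real.le_sqrt h₁ (by nlinarith [hsq, sq_nonneg (σX ^ 2 + σhat ^ 2 - D₃)])).mpr (by nlinarith)
    calc σX ^ 2 + σhat ^ 2 - D₃ ≤ Real.sqrt (4 * σhat ^ 2 * (σX ^ 2 - D₁)) := h5
      _ = 2 * σhat * Real.sqrt (σX ^ 2 - D₁) := by
          rw [show (4 * σhat ^ 2 * (σX ^ 2 - D₁)) = (2*σhat)^2 * (σX ^ 2 - D₁) by ring,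
            Real.sqrt_mul (by positivity), Real.sqrt_sq (by positivity)]
  linarith
end

section
/- Let σ_X > 0, σ̂ > 0, and let D₁, D₃, D_b be real numbers with σ_X² + σ̂² − D₃ ≥ 0, D₁ ≤ σ_X² − (σ_X² + σ̂² − D₃)²/(4·σ̂²), 0 < D_b ≤ 2·D₁, and D₃ ≥ 0. Then D₃/D_b ≥ (σ_X² + σ̂² − 2·σ̂·√(σ_X² − D₁))/(2·D₁). -/
open Real

/-- Distortion-ratio lower bound of Theorem 5. -/
theorem distortion_ratio_lower_bound
    (σX σhat D₁ D₃ Db : ℝ) (hσX : 0 < σX) (hσhat : 0 < σhat)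
    (h₁ : σX ^ 2 + σhat ^ 2 - D₃ ≥ 0)
    (h₂ : D₁ ≤ σX ^ 2 - (σX ^ 2 + σhat ^ 2 - D₃) ^ 2 / (4 * σhat ^ 2))
    (h₃ : 0 < Db) (h₄ : Db ≤ 2 * D₁) (h₅ : D₃ ≥ 0) :
    D₃ / Db ≥ (σX ^ 2 + σhat ^ 2 - 2 * σhat * Real.sqrt (σX ^ 2 - D₁)) / (2 * D₁) := by
  have hD₁ : 0 < 2 * D₁ := lt_of_lt_of_le h₃ h₄
  set s : ℝ := Real.sqrt (σX ^ 2 - D₁) with hs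
  have hq : (σX ^ 2 + σhat ^ 2 - D₃) ^ 2 ≤ 4 * σhat ^ 2 * (σX ^ 2 - D₁) := by
    have h4 : (0:ℝ) < 4 * σhat ^ 2 := by positivity
    have hdiv : (σX ^ 2 + σhat ^ 2 - D₃) ^ 2 / (4 * σhat ^ 2) ≤ σX ^ 2 - D₁ := by
      linarith
    exact (div_le_iff₀ h4).mp hdiv |>.trans_eq (mul_comm _ _)
  have hnn : 0 ≤ σX ^ 2 - D₁ := by
    have h4 : (0:ℝ) < 4 * σhat ^ 2 := by positivity
    have := div_nonneg (sq_nonneg (σX ^ 2 + σhat ^ 2 - D₃)) h4.le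
    linarith
  have hssq : s ^ 2 = σX ^ 2 - D₁ := Real.sq_sqrt hnn
  have hsnn : 0 ≤ s := Real.sqrt_nonneg _
  have hkey : σX ^ 2 + σhat ^ 2 - D₃ ≤ 2 * σhat * s := by
    nlinarith [hq, hssq, sq_nonneg (σX ^ 2 + σhat ^ 2 - D₃ - 2 * σhat * s),
      mul_nonneg (mul_nonneg (by norm_num : (0:ℝ) ≤ 2) hσhat.le) hsnn]
  have hND : σX ^ 2 + σhat ^ 2 - 2 * σhat * s ≤ D₃ := by linarith
  rcases le_or_gt (σX ^ 2 + σhat ^ 2 - 2 * σhat * s) 0 with hN | hN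
  · have : (σX ^ 2 + σhat ^ 2 - 2 * σhat * s) / (2 * D₁) ≤ 0 :=
      div_nonpos_of_nonpos_of_nonneg hN hD₁.le
    exact le_trans this (div_nonneg h₅ h₃.le)
  · calc (σX ^ 2 + σhat ^ 2 - 2 * σhat * s) / (2 * D₁)
        ≤ (σX ^ 2 + σhat ^ 2 - 2 * σhat * s) / Db := by gcongr
      _ ≤ D₃ / Db := by gcongr
end
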